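/- Let U and V be real Hilbert spaces, b : U × V → ℝ a bounded bilinear form with associated operator B : U → V' defined by ⟨Bu, v⟩ = b(u,v), and R_V : V → V' the Riesz isomorphism. If U_h ⊆ U is a finite-dimensional subspace and u_h ∈ U_h minimizes the residual ‖B(δu) − ℓ‖_{V'} over δu ∈ U_h for a given ℓ ∈ V', then u_h satisfies b(u_h, v) = ℓ(v) for all v in the 'optimal test space' V_opt = R_V⁻¹ B U_h. -/

import Mathlib

open scoped RealInnerProductSpace

/-- The minimum-residual solution satisfies the variational equation tested
against the optimal test space `V_opt = R_V⁻¹ B U_h`. -/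
theorem stmt0 {U V : Type*}
    [NormedAddCommGroup U] [InnerProductSpace ℝ U] [CompleteSpace U]
    [NormedAddCommGroup V] [InnerProductSpace ℝ V] [CompleteSpace V]
    (b : U →L[ℝ] V →L[ℝ] ℝ) (U_h : Submodule ℝ U) [FiniteDimensional ℝ U_h]
    (ℓ : V →L[ℝ] ℝ) (u_h : U) (hu_h : u_h ∈ U_h)
    (hmin : ∀ δu ∈ U_h, ‖b u_h - ℓ‖ ≤ ‖b δu - ℓ‖) :
    ∀ w ∈ U_h, b u_h ((InnerProductSpace.toDual ℝ V).symm (b w)) =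
      ℓ ((InnerProductSpace.toDual ℝ V).symm (b w)) := by
  set T := (InnerProductSpace.toDual ℝ V)
  -- the linear map U → V, u ↦ T.symm (b u)
  set f : U →ₗ[ℝ] V := T.symm.toLinearEquiv.toLinearMap ∘ₗ (b : U →ₗ[ℝ] V →L[ℝ] ℝ)
  set K : Submodule ℝ V := U_h.map f with hK
  set uℓ : V := T.symm ℓ with huℓ
  have hnorm : ∀ δu : U, ‖b δu - ℓ‖ = ‖uℓ - f δu‖ := by
    intro δu
    have : uℓ - f δu = T.symm (ℓ - b δu) := by simp [huℓ, f, map_sub]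
    rw [this, T.symm.norm_map, ← neg_sub, norm_neg]
  have hmem : f u_h ∈ K := Submodule.mem_map_of_mem hu_h
  have hinf : ‖uℓ - f u_h‖ = ⨅ w : (↑K : Set V), ‖uℓ - w‖ := by
    refine le_antisymm ?_ ?_
    · refine le_ciInf fun ⟨w, hw⟩ => ?_
      obtain ⟨δu, hδu, rfl⟩ := hw
      rw [← hnorm, ← hnorm]
      exact hmin δu hδu
    · refine ciInf_le ⟨0, ?_⟩ (⟨f u_h, hmem⟩ : (↑K : Set V))
      rintro x ⟨w, rfl⟩
      exact norm_nonneg _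
  have horth := (Submodule.norm_eq_iInf_iff_real_inner_eq_zero K hmem).1 hinf
  intro w hw
  have hwK : f w ∈ K := Submodule.mem_map_of_mem hw
  have h0 : ⟪uℓ - f u_h, f w⟫ = 0 := horth _ hwK
  have happ : ∀ (g : V →L[ℝ] ℝ) (v : V), g v = ⟪T.symm g, v⟫ := by
    intro g v
    conv_lhs => rw [← T.apply_symm_apply g]
    simp [T, InnerProductSpace.toDual_apply_apply]
  have h1 : ℓ (T.symm (b w)) - b u_h (T.symm (b w)) = 0 := by
    rw [happ ℓ, happ (b u_h), ← inner_sub_left]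
    exact h0
  linarith
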